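/- In the partial order on ℝ² × {−,+} modelling the almost commutative spacetime of a fermion of mass m (causal in the base, with chirality flips requiring accumulated proper time ≥ π/(2m)), a chain of states alternating chirality n times starting and ending at base points p and q requires τ(p, q) ≥ n·π/(2m); hence the frequency of chirality flips along any causal evolution is bounded by 2m/π per unit proper time. -/

import Mathlib

open Real

/-- `q - p` is a future-directed causal vector in 2D Minkowski spacetime. -/
def MinkCausal (p q : ℝ × ℝ) : Prop := |q.2 - p.2| ≤ q.1 - p.1

/-- Minkowski proper time between two causally related events. -/
noncomputable def MinkTau (p q : ℝ × ℝ) : ℝ := Real.sqrt ((q.1 - p.1) ^ 2 - (q.2 - p.2) ^ 2)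

/-- The causal relation on the almost commutative spacetime `ℝ² × {-,+}` of a fermion of
mass `m`: causal in the base, with chirality flips requiring proper time `≥ π/(2m)`. -/
def ZitterRel (m : ℝ) (a b : (ℝ × ℝ) × Bool) : Prop :=
  MinkCausal a.1 b.1 ∧ (a.2 = b.2 ∨ π / (2 * m) ≤ MinkTau a.1 b.1)

lemma minkCausal_trans {p q r : ℝ × ℝ} (h1 : MinkCausal p q) (h2 : MinkCausal q r) :
    MinkCausal p r := by
  unfold MinkCausal at *
  rw [abs_le] at *
  constructor <;> nlinarith [h1.1, h1.2, h2.1, h2.2]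

/-- Reverse triangle inequality for Minkowski proper time. -/
lemma minkTau_rev_triangle {p q r : ℝ × ℝ} (h1 : MinkCausal p q) (h2 : MinkCausal q r) :
    MinkTau p q + MinkTau q r ≤ MinkTau p r := by
  unfold MinkCausal at h1 h2
  unfold MinkTau
  set a := q.1 - p.1 with ha
  set b := q.2 - p.2 with hb
  set c := r.1 - q.1 with hc
  set d := r.2 - q.2 with hd
  have hab : |b| ≤ a := h1
  have hcd : |d| ≤ c := h2
  have hb' := abs_nonneg b
  have hd' := abs_nonneg d
  have hbb : b ≤ |b| := le_abs_self b
  have hbb' : -b ≤ |b| := neg_le_abs b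
  have hdd : d ≤ |d| := le_abs_self d
  have hdd' : -d ≤ |d| := neg_le_abs d
  have hx : (0:ℝ) ≤ a ^ 2 - b ^ 2 := by nlinarith [sq_abs b]
  have hy : (0:ℝ) ≤ c ^ 2 - d ^ 2 := by nlinarith [sq_abs d]
  have habs : |b| * |d| ≤ a * c :=
    mul_le_mul hab hcd hd' (le_trans hb' hab)
  have hbd : b * d ≤ a * c := le_trans (le_trans (le_abs_self _) (le_of_eq (abs_mul b d))) habs
  have hpos : 0 ≤ a * c - b * d := by linarith
  have hle : (a ^ 2 - b ^ 2) * (c ^ 2 - d ^ 2) ≤ (a * c - b * d) ^ 2 := by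
    nlinarith [sq_nonneg (a * d - b * c)]
  have key : Real.sqrt (a ^ 2 - b ^ 2) * Real.sqrt (c ^ 2 - d ^ 2) ≤ a * c - b * d := by
    rw [← Real.sqrt_mul hx (c ^ 2 - d ^ 2)]
    calc Real.sqrt ((a ^ 2 - b ^ 2) * (c ^ 2 - d ^ 2))
        ≤ Real.sqrt ((a * c - b * d) ^ 2) := Real.sqrt_le_sqrt hle
      _ = a * c - b * d := Real.sqrt_sq hpos
  have heq : r.1 - p.1 = a + c := by rw [ha, hc]; ring
  have heq2 : r.2 - p.2 = b + d := by rw [hb, hd]; ring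
  rw [heq, heq2]
  have hs1 := Real.sq_sqrt hx
  have hs2 := Real.sq_sqrt hy
  have hn1 := Real.sqrt_nonneg (a ^ 2 - b ^ 2)
  have hn2 := Real.sqrt_nonneg (c ^ 2 - d ^ 2)
  have htgt : (Real.sqrt (a ^ 2 - b ^ 2) + Real.sqrt (c ^ 2 - d ^ 2)) ^ 2
      ≤ (a + c) ^ 2 - (b + d) ^ 2 := by nlinarith
  calc Real.sqrt (a ^ 2 - b ^ 2) + Real.sqrt (c ^ 2 - d ^ 2)
      = Real.sqrt ((Real.sqrt (a ^ 2 - b ^ 2) + Real.sqrt (c ^ 2 - d ^ 2)) ^ 2) := by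
        rw [Real.sqrt_sq (by positivity)]
    _ ≤ Real.sqrt ((a + c) ^ 2 - (b + d) ^ 2) := Real.sqrt_le_sqrt htgt

lemma zitter_aux (m : ℝ) (hm : 0 < m) : ∀ (n : ℕ)
    (p : Fin (n + 1) → ℝ × ℝ) (ε : Fin (n + 1) → Bool),
    (∀ i : Fin n, ZitterRel m (p i.castSucc, ε i.castSucc) (p i.succ, ε i.succ)) →
    (∀ i : Fin n, ε i.succ = ! ε i.castSucc) →
    MinkCausal (p 0) (p (Fin.last n)) ∧
      (n : ℝ) * (π / (2 * m)) ≤ MinkTau (p 0) (p (Fin.last n)) := by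
  intro n
  induction n with
  | zero =>
    intro p ε _ _
    have hlz : (Fin.last 0) = (0 : Fin 1) := rfl
    rw [hlz]
    refine ⟨?_, ?_⟩
    · show |(p 0).2 - (p 0).2| ≤ (p 0).1 - (p 0).1
      simp
    · simp only [Nat.cast_zero, zero_mul]
      exact Real.sqrt_nonneg _
  | succ n ih =>
    intro p ε hstep hflip
    have IH := ih (fun i => p i.castSucc) (fun i => ε i.castSucc)
      (fun i => by
        have := hstep i.castSucc
        simpa only [Fin.succ_castSucc] using this)
      (fun i => by
        have := hflip i.castSucc
        simpa only [Fin.succ_castSucc] using this)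
    have hlaststep := hstep (Fin.last n)
    have hlastflip := hflip (Fin.last n)
    have hτlast : π / (2 * m) ≤ MinkTau (p (Fin.last n).castSucc) (p (Fin.last (n+1))) := by
      rcases hlaststep.2 with h | h
      · exfalso
        simp only at h hlastflip
        rw [hlastflip] at h
        exact (Bool.not_ne_self _ h.symm).elim
      · simpa [Fin.succ_last] using h
    have hclast : MinkCausal (p (Fin.last n).castSucc) (p (Fin.last (n+1))) := by
      have := hlaststep.1
      simpa [Fin.succ_last] using this
    have h0 : p ((0 : Fin (n+1)).castSucc) = p 0 := rfl
    have hc0 : MinkCausal (p 0) (p (Fin.last n).castSucc) := by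
      have h := IH.1; simpa only [h0] using h
    have hτ0 : (n : ℝ) * (π / (2 * m)) ≤ MinkTau (p 0) (p (Fin.last n).castSucc) := by
      have h := IH.2; simpa only [h0] using h
    refine ⟨minkCausal_trans hc0 hclast, ?_⟩
    have htri := minkTau_rev_triangle hc0 hclast
    push_cast
    nlinarith

/-- A causal chain alternating chirality `n` times from base point `p⁰` to `pⁿ`
requires total proper time at least `n · π/(2m)`: the frequency of chirality flips is
bounded by `2m/π` per unit proper time. -/
theorem zitter_frequency_bound (m : ℝ) (hm : 0 < m) (n : ℕ)
    (p : Fin (n + 1) → ℝ × ℝ) (ε : Fin (n + 1) → Bool)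
    (hstep : ∀ i : Fin n, ZitterRel m (p i.castSucc, ε i.castSucc) (p i.succ, ε i.succ))
    (hflip : ∀ i : Fin n, ε i.succ = ! ε i.castSucc) :
    (n : ℝ) * (π / (2 * m)) ≤ MinkTau (p 0) (p (Fin.last n)) := by
  exact (zitter_aux m hm n p ε hstep hflip).2
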